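/- Let T be a set and Q : T × T → ℂ with |Q(s,t)| = 1 and Q(s,t) = conj(Q(t,s)) for all s,t. Then the map π ↦ Ψ_π, where (Ψ_π f)(t) = Q_{π^{-1}}(t) f(t_π), is a group homomorphism from S_n to the group of invertible linear operators on the space of functions T^n → ℂ: Ψ_π Ψ_ν = Ψ_{πν} for all π, ν ∈ S_n. -/

import Mathlib

/-- `Q_π(t) = ∏_{i<j, π(i)>π(j)} Q(t_i, t_j)`. -/
def Qprod {T : Type*} (n : ℕ) (Q : T → T → ℂ) (π : Equiv.Perm (Fin n)) (t : Fin n → T) : ℂ :=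
  ∏ p ∈ Finset.univ.filter (fun p : Fin n × Fin n => p.1 < p.2 ∧ π p.2 < π p.1),
    Q (t p.1) (t p.2)

/-- `(Ψ_π f)(t) = Q_{π⁻¹}(t) f(t_π)` with `t_π = t ∘ π`. -/
def PsiDir {T : Type*} (n : ℕ) (Q : T → T → ℂ) (π : Equiv.Perm (Fin n))
    (f : (Fin n → T) → ℂ) : (Fin n → T) → ℂ :=
  fun t => Qprod n Q π⁻¹ t * f (t ∘ π)

private lemma Qmul_one {T : Type*} (Q : T → T → ℂ)
    (hQ : ∀ s t : T, ‖Q s t‖ = 1)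
    (hherm : ∀ s t : T, Q s t = starRingEnd ℂ (Q t s)) (a b : T) :
    Q a b * Q b a = 1 := by
  rw [hherm b a, Complex.mul_conj, Complex.normSq_eq_norm_sq, hQ]
  norm_num

private lemma Qprod_eq {T : Type*} (n : ℕ) (Q : T → T → ℂ) (σ : Equiv.Perm (Fin n))
    (u : Fin n → T) :
    Qprod n Q σ u = ∏ p ∈ Finset.univ.filter (fun p : Fin n × Fin n => p.1 < p.2),
      if σ p.2 < σ p.1 then Q (u p.1) (u p.2) else 1 := by
  unfold Qprod
  rw [← Finset.filter_filter, Finset.prod_filter]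

/-- For `Q` Hermitian with `|Q| ≡ 1` the map `π ↦ Ψ_π` is multiplicative:
`Ψ_π Ψ_ν = Ψ_{πν}`. -/
theorem PsiDir_mul {T : Type*} {n : ℕ} (Q : T → T → ℂ)
    (hQ : ∀ s t : T, ‖Q s t‖ = 1)
    (hherm : ∀ s t : T, Q s t = starRingEnd ℂ (Q t s))
    (π ν : Equiv.Perm (Fin n)) (f : (Fin n → T) → ℂ) :
    PsiDir n Q π (PsiDir n Q ν f) = PsiDir n Q (π * ν) f := by
  funext t
  simp only [PsiDir]
  have hcomp : (t ∘ ⇑π) ∘ ⇑ν = t ∘ ⇑(π * ν) := by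
    rw [Equiv.Perm.coe_mul]; rfl
  rw [hcomp, ← mul_assoc]
  congr 1
  -- key cocycle identity
  set S : Finset (Fin n × Fin n) :=
    Finset.univ.filter (fun p : Fin n × Fin n => p.1 < p.2) with hSdef
  have hmemS : ∀ p : Fin n × Fin n, p ∈ S ↔ p.1 < p.2 := by
    intro p; simp [hSdef]
  -- reindexing maps
  set e : Fin n × Fin n → Fin n × Fin n := fun p =>
    if π p.1 < π p.2 then (π p.1, π p.2) else (π p.2, π p.1) with hedef
  set e' : Fin n × Fin n → Fin n × Fin n := fun q =>
    if π⁻¹ q.1 < π⁻¹ q.2 then (π⁻¹ q.1, π⁻¹ q.2) else (π⁻¹ q.2, π⁻¹ q.1) with he'def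
  have hne : ∀ p : Fin n × Fin n, p ∈ S → π p.1 ≠ π p.2 := by
    intro p hp
    exact fun h => absurd (π.injective h) (ne_of_lt ((hmemS p).1 hp))
  have hne' : ∀ q : Fin n × Fin n, q ∈ S → π⁻¹ q.1 ≠ π⁻¹ q.2 := by
    intro q hq
    exact fun h => absurd (π⁻¹.injective h) (ne_of_lt ((hmemS q).1 hq))
  have hmid : Qprod n Q ν⁻¹ (t ∘ ⇑π) = ∏ q ∈ S,
      (if π⁻¹ q.1 < π⁻¹ q.2 then
        (if ν⁻¹ (π⁻¹ q.2) < ν⁻¹ (π⁻¹ q.1) then Q (t q.1) (t q.2) else 1)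
      else
        (if ν⁻¹ (π⁻¹ q.1) < ν⁻¹ (π⁻¹ q.2) then Q (t q.2) (t q.1) else 1)) := by
    rw [Qprod_eq]
    refine Finset.prod_nbij' e e' ?_ ?_ ?_ ?_ ?_
    · intro p hp
      rw [hmemS]
      rw [hedef]
      rcases lt_or_gt_of_ne (hne p hp) with h | h
      · simp [h]
      · simp [not_lt.2 (le_of_lt h), h]
    · intro q hq
      rw [hmemS]
      rw [he'def]
      rcases lt_or_gt_of_ne (hne' q hq) with h | h
      · simp [-Equiv.Perm.coe_inv, h]
      · simp [-Equiv.Perm.coe_inv, not_lt.2 (le_of_lt h), h]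
    · intro p hp
      rw [hedef, he'def]
      rcases lt_or_gt_of_ne (hne p hp) with h | h
      · simp [h, (hmemS p).1 hp]
      · simp [not_lt.2 (le_of_lt h), (hmemS p).1 hp, not_lt.2 (le_of_lt ((hmemS p).1 hp))]
    · intro q hq
      rw [hedef, he'def]
      rcases lt_or_gt_of_ne (hne' q hq) with h | h
      · simp only [Equiv.Perm.coe_inv] at h; simp [h, (hmemS q).1 hq]
      · simp only [Equiv.Perm.coe_inv] at h; simp [not_lt.2 (le_of_lt h), (hmemS q).1 hq, not_lt.2 (le_of_lt ((hmemS q).1 hq))]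
    · intro p hp
      rw [hedef]
      rcases lt_or_gt_of_ne (hne p hp) with h | h
      · simp [h, (hmemS p).1 hp, Function.comp]
      · simp [not_lt.2 (le_of_lt h), h, not_lt.2 (le_of_lt ((hmemS p).1 hp)),
          (hmemS p).1 hp, Function.comp]
  rw [Qprod_eq, hmid, ← Finset.prod_mul_distrib, Qprod_eq]
  refine Finset.prod_congr rfl ?_
  intro q hq
  have hinv : ∀ x : Fin n, (π * ν)⁻¹ x = ν⁻¹ (π⁻¹ x) := by
    intro x; simp [Equiv.Perm.mul_apply]
  rw [hinv, hinv]
  rcases lt_or_gt_of_ne (hne' q hq) with h | h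
  · simp [-Equiv.Perm.coe_inv, h, not_lt.2 (le_of_lt h)]
  · have h2 : ¬ π⁻¹ q.1 < π⁻¹ q.2 := not_lt.2 (le_of_lt h)
    have hne2 : ν⁻¹ (π⁻¹ q.1) ≠ ν⁻¹ (π⁻¹ q.2) := fun hx =>
      absurd (ν⁻¹.injective hx) (ne_of_gt h)
    rcases lt_or_gt_of_ne hne2 with h3 | h3
    · simp [-Equiv.Perm.coe_inv, h, h2, h3, not_lt.2 (le_of_lt h3), Qmul_one Q hQ hherm]
    · simp [-Equiv.Perm.coe_inv, h, h2, h3, not_lt.2 (le_of_lt h3)]
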